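/- There exists a finite constant C such that for every nonzero y ∈ ℝ², every α > 0, and every i ∈ ℤ, the Lebesgue measure of the set {x ∈ ℝ² : |x₁y₂ − x₂y₁| ≤ α and 2^{i−1} ≤ ‖x‖ < 2^i} is at most C α 2^{i} ‖y‖^{-1}. -/

import Mathlib

open MeasureTheory Set
open scoped ENNReal NNReal

/-- the measure of the determinant sublevel set intersected with the
annulus `2^(i-1) ≤ ‖x‖ < 2^i` is at most `C α 2^i / ‖y‖`. -/
theorem statement14 :
    ∃ C : ℝ, 0 ≤ C ∧ ∀ y : EuclideanSpace ℝ (Fin 2), y ≠ 0 → ∀ α : ℝ, 0 < α → ∀ i : ℤ,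
      volume {x : EuclideanSpace ℝ (Fin 2) |
          |x 0 * y 1 - x 1 * y 0| ≤ α ∧ (2 : ℝ) ^ (i - 1) ≤ ‖x‖ ∧ ‖x‖ < (2 : ℝ) ^ i}
        ≤ ENNReal.ofReal (C * α * (2 : ℝ) ^ i * ‖y‖⁻¹) := by
  refine ⟨4, by norm_num, ?_⟩
  intro y hy α hα i
  have hy0 : (0:ℝ) < ‖y‖ := norm_pos_iff.2 hy
  have h2i : (0:ℝ) < (2:ℝ) ^ i := zpow_pos (by norm_num) i
  set M : Matrix (Fin 2) (Fin 2) ℝ := !![y 1, -(y 0); y 0, y 1] with hM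
  set f : EuclideanSpace ℝ (Fin 2) →ₗ[ℝ] EuclideanSpace ℝ (Fin 2) :=
    Matrix.toEuclideanLin M with hf
  have hnormsq : ‖y‖ ^ 2 = y 0 ^ 2 + y 1 ^ 2 := by
    rw [EuclideanSpace.norm_eq, Real.sq_sqrt (by positivity), Fin.sum_univ_two]
    simp only [Real.norm_eq_abs, sq_abs]
  have hdet : LinearMap.det f = ‖y‖ ^ 2 := by
    have : LinearMap.det f = M.det := by
      rw [hf, Matrix.toEuclideanLin_eq_toLin_orthonormal]; exact LinearMap.det_toLin _ M
    rw [this, hM, Matrix.det_fin_two_of, hnormsq]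
    ring
  have hdetne : LinearMap.det f ≠ 0 := by
    rw [hdet]; positivity
  set B : Set (EuclideanSpace ℝ (Fin 2)) :=
    {u | |u 0| ≤ α ∧ |u 1| ≤ (2:ℝ) ^ i * ‖y‖} with hB
  have hsub : {x : EuclideanSpace ℝ (Fin 2) |
      |x 0 * y 1 - x 1 * y 0| ≤ α ∧ (2 : ℝ) ^ (i - 1) ≤ ‖x‖ ∧ ‖x‖ < (2 : ℝ) ^ i}
      ⊆ f ⁻¹' B := by
    rintro x ⟨h1, _, h3⟩
    have key : (f x).ofLp = Matrix.mulVec M x.ofLp := Matrix.ofLp_toEuclideanLin_apply M x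
    have hf0 : f x 0 = x 0 * y 1 - x 1 * y 0 := by
      rw [key]; simp [Matrix.mulVec, dotProduct, Fin.sum_univ_two, hM]; ring
    have hf1 : f x 1 = x 0 * y 0 + x 1 * y 1 := by
      rw [key]; simp [Matrix.mulVec, dotProduct, Fin.sum_univ_two, hM]; ring
    refine ⟨by rwa [hf0], ?_⟩
    have hinner : f x 1 = inner ℝ x y := by
      rw [hf1]; simp [PiLp.inner_apply, Fin.sum_univ_two]; ring
    rw [hinner]
    calc |(inner ℝ x y : ℝ)| ≤ ‖x‖ * ‖y‖ := abs_real_inner_le_norm x y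
      _ ≤ (2:ℝ) ^ i * ‖y‖ := by
          exact mul_le_mul_of_nonneg_right h3.le (norm_nonneg y)
  have hBvol : volume B = ENNReal.ofReal (2 * α) * ENNReal.ofReal (2 * ((2:ℝ) ^ i * ‖y‖)) := by
    have heq : B = (MeasurableEquiv.toLp 2 (Fin 2 → ℝ)).symm ⁻¹'
        (Set.univ.pi fun j : Fin 2 => if j = 0 then Icc (-α) α
          else Icc (-((2:ℝ) ^ i * ‖y‖)) ((2:ℝ) ^ i * ‖y‖)) := by
      ext u
      simp only [hB, mem_setOf_eq, mem_preimage, mem_pi, mem_univ, forall_true_left,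
        Fin.forall_fin_two]
      simp [MeasurableEquiv.coe_toLp_symm, abs_le, mem_Icc]
    rw [heq, (EuclideanSpace.volume_preserving_symm_measurableEquiv_toLp (Fin 2)).measure_preimage
      ((MeasurableSet.univ_pi (fun j => by split <;> exact measurableSet_Icc)).nullMeasurableSet)]
    rw [volume_pi_pi]
    rw [Fin.prod_univ_two]
    norm_num [Real.volume_Icc]
    congr 1 <;> rw [← two_mul, ENNReal.ofReal_mul (by norm_num)] <;> norm_num
  calc volume {x : EuclideanSpace ℝ (Fin 2) |
          |x 0 * y 1 - x 1 * y 0| ≤ α ∧ (2 : ℝ) ^ (i - 1) ≤ ‖x‖ ∧ ‖x‖ < (2 : ℝ) ^ i}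
      ≤ volume (f ⁻¹' B) := measure_mono hsub
    _ = ENNReal.ofReal |(LinearMap.det f)⁻¹| * volume B :=
        Measure.addHaar_preimage_linearMap volume hdetne B
    _ = ENNReal.ofReal (4 * α * (2:ℝ) ^ i * ‖y‖⁻¹) := by
        rw [hBvol, hdet, ← ENNReal.ofReal_mul (by positivity), ← ENNReal.ofReal_mul (by positivity)]
        congr 1
        rw [abs_of_pos (by positivity)]
        field_simp
        ring
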